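/- Consider the semi-discrete Burgers scheme ∂ₜu = −(1/3)u∘(Du) − (1/3)D(u²) + (γ/2)(D₊−D₋)u, where D = (D₊+D₋)/2, H is diagonal positive definite, ⟨D₊f,g⟩_H + ⟨f,D₋g⟩_H = 0 for all f,g, ⟨f,(D₊−D₋)f⟩_H ≤ 0 for all f, and γ ≥ 0. Then the discrete entropy E_h = (1/2)⟨u,u⟩_H satisfies dE_h/dt = (γ/2)⟨u,(D₊−D₋)u⟩_H ≤ 0 along solutions. -/

import Mathlib

/-- Entropy stability of the semi-discrete Burgers scheme: along solutions of
`∂ₜu = −(1/3)u∘(Du) − (1/3)D(u²) + (γ/2)(D₊−D₋)u` with `D = (D₊+D₋)/2`,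
the discrete entropy `E_h = (1/2)⟨u,u⟩_H` satisfies
`dE_h/dt = (γ/2)⟨u,(D₊−D₋)u⟩_H ≤ 0`. -/
theorem semidiscrete_burgers_entropy_stable (N : ℕ)
    (Dp Dm : Matrix (Fin N) (Fin N) ℝ) (w : Fin N → ℝ) (hw : ∀ i, 0 < w i)
    (γ : ℝ) (hγ : 0 ≤ γ)
    (hsbp : ∀ f g : Fin N → ℝ,
      (∑ i, w i * (Dp.mulVec f) i * g i) + (∑ i, w i * f i * (Dm.mulVec g) i) = 0)
    (hupwind : ∀ f : Fin N → ℝ, (∑ i, w i * f i * ((Dp - Dm).mulVec f) i) ≤ 0)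
    (u : ℝ → Fin N → ℝ)
    (hode : ∀ t, HasDerivAt u
      (fun i => -(1 / 3) * u t i * ((((1 : ℝ) / 2) • (Dp + Dm)).mulVec (u t)) i
        - (1 / 3) * ((((1 : ℝ) / 2) • (Dp + Dm)).mulVec (fun j => u t j * u t j)) i
        + (γ / 2) * ((Dp - Dm).mulVec (u t)) i) t) :
    ∀ t, HasDerivAt (fun s => (1 / 2) * ∑ i, w i * u s i * u s i)
        ((γ / 2) * ∑ i, w i * u t i * ((Dp - Dm).mulVec (u t)) i) t
      ∧ (γ / 2) * (∑ i, w i * u t i * ((Dp - Dm).mulVec (u t)) i) ≤ 0 := by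
  intro t
  set U : Fin N → ℝ := u t with hU
  set U2 : Fin N → ℝ := fun j => u t j * u t j with hU2
  set v : Fin N → ℝ := fun i =>
      -(1 / 3) * u t i * ((((1 : ℝ) / 2) • (Dp + Dm)).mulVec (u t)) i
        - (1 / 3) * ((((1 : ℝ) / 2) • (Dp + Dm)).mulVec (fun j => u t j * u t j)) i
        + (γ / 2) * ((Dp - Dm).mulVec (u t)) i with hv
  have hcoord : ∀ i, HasDerivAt (fun s => u s i) (v i) t :=
    hasDerivAt_pi.mp (hode t)
  -- key cancellation identity
  have key : (∑ i, w i * U i * v i)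
      = (γ / 2) * ∑ i, w i * U i * ((Dp - Dm).mulVec U) i := by
    have h1 := hsbp U U2
    have h2 := hsbp U2 U
    have expand : (∑ i, w i * U i * v i)
        = (-(1/6 : ℝ)) * (∑ i, w i * (Dp.mulVec U) i * U2 i)
          + (-(1/6 : ℝ)) * (∑ i, w i * U2 i * (Dm.mulVec U) i)
          + (-(1/6 : ℝ)) * (∑ i, w i * (Dp.mulVec U2) i * U i)
          + (-(1/6 : ℝ)) * (∑ i, w i * U i * (Dm.mulVec U2) i)
          + (γ / 2) * (∑ i, w i * U i * ((Dp - Dm).mulVec U) i) := by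
      simp only [Finset.mul_sum, ← Finset.sum_add_distrib]
      refine Finset.sum_congr rfl fun i _ => ?_
      simp only [hv, Matrix.add_mulVec, Matrix.smul_mulVec, Pi.smul_apply,
        Pi.add_apply, smul_eq_mul, ← hU, ← hU2]
      ring
    rw [expand]
    linarith [h1, h2]
  constructor
  · have hsum : HasDerivAt (fun s => ∑ i, w i * u s i * u s i)
        (∑ i, w i * U i * v i * 2) t := by
      apply HasDerivAt.fun_sum
      intro i _
      have := ((hcoord i).mul (hcoord i)).const_mul (w i)
      have heq : w i * (v i * u t i + u t i * v i) = w i * U i * v i * 2 := by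
        simp only [← hU]; ring
      rw [heq] at this
      simpa [mul_assoc] using this
    have := hsum.const_mul (1/2 : ℝ)
    have heq2 : (1/2 : ℝ) * (∑ i, w i * U i * v i * 2)
        = (γ / 2) * ∑ i, w i * u t i * ((Dp - Dm).mulVec (u t)) i := by
      rw [← Finset.sum_mul]
      rw [show (1/2 : ℝ) * ((∑ i, w i * U i * v i) * 2) = ∑ i, w i * U i * v i by ring]
      rw [key]
    rwa [heq2] at this
  · have h := hupwind (u t)
    have : 0 ≤ γ / 2 := by linarith
    exact mul_nonpos_of_nonneg_of_nonpos this h
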